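/- Let Σ* := {v ∈ ℝ^U : Λ(v) is positive semidefinite} and Σ := {s ∈ ℝ^U : sᵀv ≥ 0 for all v ∈ Σ*}. Suppose L ≥ 2, Λ(x) is positive definite, t lies in the topological interior of Σ, and tᵀ(x·xᵀ − (L − 1)·H(x)⁻¹)·t ≥ 0. Then Λ(H(x)⁻¹·t) is positive semidefinite (i.e., x is a dual certificate of t). -/

import Mathlib

open Matrix Finset

/-- The gradient of the barrier `f(x) = -log det Λ(x)`:
`g(x)_i = -tr(Λ(x)⁻¹ · Λ(e_i))` (with the total matrix inverse, `0` for singular matrices). -/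
noncomputable def grad {U L : ℕ} (Lam : (Fin U → ℝ) →ₗ[ℝ] Matrix (Fin L) (Fin L) ℝ)
    (x : Fin U → ℝ) : Fin U → ℝ :=
  fun i => -((Lam x)⁻¹ * Lam (Pi.single i 1)).trace

/-- The Hessian of the barrier: `H(x)_{ij} = tr(Λ(x)⁻¹ Λ(e_i) Λ(x)⁻¹ Λ(e_j))`. -/
noncomputable def hess {U L : ℕ} (Lam : (Fin U → ℝ) →ₗ[ℝ] Matrix (Fin L) (Fin L) ℝ)
    (x : Fin U → ℝ) : Matrix (Fin U) (Fin U) ℝ :=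
  Matrix.of fun i j =>
    ((Lam x)⁻¹ * Lam (Pi.single i 1) * (Lam x)⁻¹ * Lam (Pi.single j 1)).trace

/-- The local norm `‖v‖_x = (vᵀ H(x) v)^{1/2}`. -/
noncomputable def locNorm {U L : ℕ} (Lam : (Fin U → ℝ) →ₗ[ℝ] Matrix (Fin L) (Fin L) ℝ)
    (x v : Fin U → ℝ) : ℝ :=
  Real.sqrt (v ⬝ᵥ (hess Lam x).mulVec v)

/-- The dual local norm `‖t‖*_x = (tᵀ H(x)⁻¹ t)^{1/2}`. -/
noncomputable def dualNorm {U L : ℕ} (Lam : (Fin U → ℝ) →ₗ[ℝ] Matrix (Fin L) (Fin L) ℝ)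
    (x t : Fin U → ℝ) : ℝ :=
  Real.sqrt (t ⬝ᵥ (hess Lam x)⁻¹.mulVec t)


section Aux

lemma eig_dichotomy {L : ℕ} (hL : 0 < L) (μ : Fin L → ℝ)
    (h : ((L : ℝ) - 1) * ∑ i, μ i ^ 2 ≤ (∑ i, μ i) ^ 2) :
    (∀ i, 0 ≤ μ i) ∨ (∀ i, μ i ≤ 0) := by
  by_contra hc
  push_neg at hc
  obtain ⟨⟨j, hj⟩, k, hk⟩ := hc
  have key : ∀ m : Fin L, (L : ℝ) * μ m ^ 2 ≤ 2 * μ m * ∑ i, μ i := by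
    intro m
    have hsplit : ∑ i, μ i = μ m + ∑ i ∈ univ.erase m, μ i := by
      rw [add_comm, Finset.sum_erase_add _ _ (mem_univ m)]
    have hsplit2 : ∑ i, μ i ^ 2 = μ m ^ 2 + ∑ i ∈ univ.erase m, μ i ^ 2 := by
      rw [add_comm, Finset.sum_erase_add _ _ (mem_univ m)]
    have hCS : (∑ i ∈ univ.erase m, μ i) ^ 2 ≤ ((L : ℝ) - 1) * ∑ i ∈ univ.erase m, μ i ^ 2 := by
      have h0 := sq_sum_le_card_mul_sum_sq (s := univ.erase m) (f := μ)
      have hcard : ((univ.erase m).card : ℝ) = (L : ℝ) - 1 := by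
        rw [card_erase_of_mem (mem_univ m), card_univ, Fintype.card_fin,
          Nat.cast_sub hL, Nat.cast_one]
      rwa [hcard] at h0
    rw [hsplit2] at h
    rw [hsplit] at h ⊢
    nlinarith [hCS, h]
  have hjm := key j
  have hkm := key k
  have hLpos : (0 : ℝ) < L := by exact_mod_cast hL
  have hT1 : 0 < 2 * μ j * ∑ i, μ i := lt_of_lt_of_le (by nlinarith [hLpos, mul_pos_of_neg_of_neg hj hj]) hjm
  have hT2 : 0 < 2 * μ k * ∑ i, μ i := lt_of_lt_of_le (by nlinarith [hLpos, mul_pos hk hk]) hkm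
  nlinarith [hT1, hT2, hj, hk]


lemma trace_eq_sum_eig {L : ℕ} {S : Matrix (Fin L) (Fin L) ℝ} (hS : S.IsHermitian) :
    S.trace = ∑ i, hS.eigenvalues i := by
  set V : Matrix (Fin L) (Fin L) ℝ := ↑hS.eigenvectorUnitary with hV
  have h1 : star V * V = 1 := mem_unitaryGroup_iff'.mp hS.eigenvectorUnitary.2
  conv_lhs => rw [hS.spectral_theorem, Unitary.conjStarAlgAut_apply]
  rw [Matrix.trace_mul_comm, ← Matrix.mul_assoc, ← hV, h1, one_mul, trace_diagonal]
  simp [RCLike.ofReal_real_eq_id]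

lemma trace_sq_eq_sum_eig {L : ℕ} {S : Matrix (Fin L) (Fin L) ℝ} (hS : S.IsHermitian) :
    (S * S).trace = ∑ i, hS.eigenvalues i ^ 2 := by
  set V : Matrix (Fin L) (Fin L) ℝ := ↑hS.eigenvectorUnitary with hV
  set D : Matrix (Fin L) (Fin L) ℝ := diagonal (RCLike.ofReal ∘ hS.eigenvalues) with hD
  have h1 : star V * V = 1 := mem_unitaryGroup_iff'.mp hS.eigenvectorUnitary.2
  have h2 : S * S = V * (D * D) * star V := by
    conv_lhs => rw [hS.spectral_theorem, Unitary.conjStarAlgAut_apply]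
    rw [← hV, ← hD]
    simp only [Matrix.mul_assoc]
    rw [← Matrix.mul_assoc (star V) V, h1, one_mul]
  rw [h2, Matrix.trace_mul_comm, ← Matrix.mul_assoc, h1, one_mul, hD,
    diagonal_mul_diagonal, trace_diagonal]
  simp [RCLike.ofReal_real_eq_id, sq]

lemma neg_psd_of_eig_nonpos {L : ℕ} {S : Matrix (Fin L) (Fin L) ℝ} (hS : S.IsHermitian)
    (h : ∀ i, hS.eigenvalues i ≤ 0) : (-S).PosSemidef := by
  have hneg : -S = (hS.eigenvectorUnitary : Matrix (Fin L) (Fin L) ℝ) *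
      diagonal (fun i => -(RCLike.ofReal ∘ hS.eigenvalues) i) *
      (star hS.eigenvectorUnitary : Matrix (Fin L) (Fin L) ℝ) := by
    conv_lhs => rw [hS.spectral_theorem, Unitary.conjStarAlgAut_apply]
    rw [← diagonal_neg, Matrix.mul_neg, Matrix.neg_mul]
  rw [hneg]
  have : (star (hS.eigenvectorUnitary : Matrix (Fin L) (Fin L) ℝ)) =
      (hS.eigenvectorUnitary : Matrix (Fin L) (Fin L) ℝ)ᴴ := rfl
  rw [this]
  refine PosSemidef.mul_mul_conjTranspose_same ?_ _
  refine posSemidef_diagonal_iff.mpr fun i => ?_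
  simpa using h i

lemma lam_eq_sum {U L : ℕ} (Lam : (Fin U → ℝ) →ₗ[ℝ] Matrix (Fin L) (Fin L) ℝ)
    (v : Fin U → ℝ) : Lam v = ∑ i, v i • Lam (Pi.single i 1) := by
  have hv : v = ∑ i, v i • (Pi.single i 1 : Fin U → ℝ) := by
    ext j
    simp [Pi.single_apply]
  conv_lhs => rw [hv]
  simp

lemma dot_hess {U L : ℕ} (Lam : (Fin U → ℝ) →ₗ[ℝ] Matrix (Fin L) (Fin L) ℝ)
    (x v w : Fin U → ℝ) :
    v ⬝ᵥ (hess Lam x).mulVec w = ((Lam x)⁻¹ * Lam v * (Lam x)⁻¹ * Lam w).trace := by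
  conv_rhs => rw [lam_eq_sum Lam v, lam_eq_sum Lam w]
  simp only [Matrix.mul_sum, Matrix.sum_mul, Matrix.mul_smul, Matrix.smul_mul,
    Matrix.trace_sum, Matrix.trace_smul, smul_eq_mul, Finset.mul_sum, Finset.sum_mul,
    dotProduct, Matrix.mulVec, hess, Matrix.of_apply]
  rw [Finset.sum_comm]
  apply Finset.sum_congr rfl; intro i _
  apply Finset.sum_congr rfl; intro j _
  ring

end Aux

set_option maxHeartbeats 1000000 in
/-- conic sufficient condition for dual certificates:
if `t` is interior to `Σ` and `tᵀ(xxᵀ − (L−1)H(x)⁻¹)t ≥ 0`, then `x ∈ C(t)`. -/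
theorem stmt9 {U L : ℕ} (hU : 0 < U) (hL : 2 ≤ L)
    (Lam : (Fin U → ℝ) →ₗ[ℝ] Matrix (Fin L) (Fin L) ℝ)
    (hinj : Function.Injective Lam) (hsym : ∀ v, (Lam v).IsSymm)
    (x : Fin U → ℝ) (hx : (Lam x).PosDef) (t : Fin U → ℝ)
    (ht : t ∈ interior {s : Fin U → ℝ | ∀ v, (Lam v).PosSemidef → 0 ≤ s ⬝ᵥ v})
    (hineq : 0 ≤ (x ⬝ᵥ t) ^ 2 - ((L : ℝ) - 1) * (t ⬝ᵥ (hess Lam x)⁻¹.mulVec t)) :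
    (Lam ((hess Lam x)⁻¹.mulVec t)).PosSemidef := by
  classical
  have hLH : ∀ v, (Lam v).IsHermitian := fun v => by
    rw [Matrix.IsHermitian, conjTranspose_eq_transpose_of_trivial]
    exact hsym v
  have hAdet : IsUnit (Lam x).det := isUnit_iff_ne_zero.mpr hx.det_pos.ne'
  have hAinv : (Lam x)⁻¹ * Lam x = 1 := Matrix.nonsing_inv_mul _ hAdet
  -- square root of Lam x
  have hPSD := hx.posSemidef
  obtain ⟨R, hRpsd, hRR⟩ : ∃ R : Matrix (Fin L) (Fin L) ℝ, R.PosSemidef ∧ R * R = Lam x := by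
    open scoped MatrixOrder in
    exact ⟨CFC.sqrt (Lam x), (CFC.sqrt_nonneg _).posSemidef, CFC.sqrt_mul_sqrt_self _ hPSD.nonneg⟩
  have hRH : R.IsHermitian := hRpsd.1
  have hRdet : IsUnit R.det := by
    refine isUnit_iff_ne_zero.mpr fun h0 => hx.det_pos.ne' ?_
    rw [← hRR, det_mul, h0, mul_zero]
  have hRiR : R⁻¹ * R = 1 := Matrix.nonsing_inv_mul R hRdet
  have hRRi : R * R⁻¹ = 1 := Matrix.mul_nonsing_inv R hRdet
  have hRiH : R⁻¹.IsHermitian := by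
    rw [Matrix.IsHermitian, Matrix.conjTranspose_nonsing_inv, hRH.eq]
  have hAiRR : (Lam x)⁻¹ = R⁻¹ * R⁻¹ := by rw [← hRR, Matrix.mul_inv_rev]
  -- conjugated matrices
  set Sv : (Fin U → ℝ) → Matrix (Fin L) (Fin L) ℝ := fun v => R⁻¹ * Lam v * R⁻¹ with hSv
  have htr : ∀ v w : Fin U → ℝ,
      ((Lam x)⁻¹ * Lam v * (Lam x)⁻¹ * Lam w).trace = (Sv v * Sv w).trace := by
    intro v w
    rw [hAiRR, hSv]
    simp only [Matrix.mul_assoc]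
    rw [Matrix.trace_mul_comm]
    simp only [Matrix.mul_assoc]
  have hSsym : ∀ v, (Sv v).IsHermitian := by
    intro v
    rw [hSv]
    simp only
    rw [Matrix.IsHermitian, Matrix.conjTranspose_mul, Matrix.conjTranspose_mul,
      hRiH.eq, (hLH v).eq, Matrix.mul_assoc]
  have hSrec : ∀ v : Fin U → ℝ, R * Sv v * R = Lam v := by
    intro v
    rw [hSv]
    simp only [Matrix.mul_assoc]
    rw [hRiR, mul_one, ← Matrix.mul_assoc, hRRi, one_mul]
  have htrSS : ∀ v : Fin U → ℝ, (Sv v * Sv v).trace = ∑ i, ∑ j, (Sv v i j) ^ 2 := by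
    intro v
    have hsymm : ∀ i j, Sv v j i = Sv v i j := by
      intro i j
      conv_lhs => rw [← (hSsym v).eq]
      simp [Matrix.conjTranspose_apply]
    rw [Matrix.trace]
    simp only [Matrix.diag, Matrix.mul_apply]
    apply Finset.sum_congr rfl; intro i _
    apply Finset.sum_congr rfl; intro j _
    rw [hsymm i j, sq]
  -- Hessian is positive definite
  have hHsym : (hess Lam x).IsHermitian := by
    rw [Matrix.IsHermitian]
    ext i j
    simp only [Matrix.conjTranspose_apply, hess, Matrix.of_apply, star_trivial]
    rw [htr, htr, Matrix.trace_mul_comm]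
  have hHpd : (hess Lam x).PosDef := by
    refine PosDef.of_dotProduct_mulVec_pos hHsym fun v hv => ?_
    have h1 : v ⬝ᵥ (hess Lam x).mulVec v = ∑ i, ∑ j, (Sv v i j) ^ 2 := by
      rw [dot_hess, htr, htrSS]
    rw [show star v = v from star_trivial v]
    rw [show (hess Lam x) *ᵥ v = (hess Lam x).mulVec v from rfl, h1]
    have hS0 : Sv v ≠ 0 := by
      intro h0
      apply hv
      apply hinj
      rw [map_zero, ← hSrec v, h0, Matrix.mul_zero, Matrix.zero_mul]
    obtain ⟨i, j, hij⟩ : ∃ i j, Sv v i j ≠ 0 := by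
      by_contra hc
      push_neg at hc
      exact hS0 (by ext i j; simpa using hc i j)
    refine Finset.sum_pos' (fun i _ => Finset.sum_nonneg fun j _ => sq_nonneg _)
      ⟨i, Finset.mem_univ i, Finset.sum_pos' (fun j _ => sq_nonneg _)
        ⟨j, Finset.mem_univ j, by positivity⟩⟩
  -- the candidate w and its conjugate S
  have hHdet : IsUnit (hess Lam x).det := isUnit_iff_ne_zero.mpr hHpd.det_pos.ne'
  set w := (hess Lam x)⁻¹.mulVec t with hwdef
  have hHw : (hess Lam x).mulVec w = t := by
    rw [hwdef, Matrix.mulVec_mulVec, Matrix.mul_nonsing_inv _ hHdet, Matrix.one_mulVec]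
  set S := Sv w with hSdef
  have hSH : S.IsHermitian := hSsym w
  have hxt : x ⬝ᵥ t = S.trace := by
    rw [← hHw, dot_hess, hAinv, Matrix.one_mul, hAiRR, Matrix.mul_assoc,
      Matrix.trace_mul_comm]
  have htw : t ⬝ᵥ w = (S * S).trace := by
    rw [← hHw, dotProduct_comm, dot_hess, htr]
  have hineq' : ((L : ℝ) - 1) * ∑ i, hSH.eigenvalues i ^ 2 ≤ (∑ i, hSH.eigenvalues i) ^ 2 := by
    rw [← trace_eq_sum_eig hSH, ← trace_sq_eq_sum_eig hSH, ← htw, ← hxt]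
    linarith [hineq]
  have hLamw : Lam w = R * S * R := (hSrec w).symm
  suffices hpsd : S.PosSemidef by
    have h2 : (R * S * Rᴴ).PosSemidef := hpsd.mul_mul_conjTranspose_same R
    rwa [hRH.eq, ← hLamw] at h2
  rcases eig_dichotomy (by omega) hSH.eigenvalues hineq' with hpos | hneg
  · exact hSH.posSemidef_iff_eigenvalues_nonneg.mpr hpos
  · have hnegS : (-S).PosSemidef := neg_psd_of_eig_nonpos hSH hneg
    have hnegw : (Lam (-w)).PosSemidef := by
      have h2 : (R * (-S) * Rᴴ).PosSemidef := hnegS.mul_mul_conjTranspose_same R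
      rw [hRH.eq] at h2
      rw [map_neg, hLamw, show -(R * S * R) = R * (-S) * R from by noncomm_ring]
      exact h2
    have h1 : 0 ≤ t ⬝ᵥ (-w) := (interior_subset ht) (-w) hnegw
    have h2 : ∑ i, hSH.eigenvalues i ^ 2 ≤ 0 := by
      rw [← trace_sq_eq_sum_eig hSH, ← htw]
      have : t ⬝ᵥ (-w) = -(t ⬝ᵥ w) := by simp
      linarith [h1, this ▸ h1]
    have hsum0 : ∑ i, hSH.eigenvalues i ^ 2 = 0 :=
      le_antisymm h2 (Finset.sum_nonneg fun i _ => sq_nonneg _)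
    have hall0 : ∀ i, 0 ≤ hSH.eigenvalues i := by
      intro i
      have := (Finset.sum_eq_zero_iff_of_nonneg (fun i _ => sq_nonneg (hSH.eigenvalues i))).mp
        hsum0 i (Finset.mem_univ i)
      have := pow_eq_zero_iff (n := 2) (by norm_num) |>.mp this
      linarith
    exact hSH.posSemidef_iff_eigenvalues_nonneg.mpr hall0
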